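/- Let N ≥ 1 and let x = (x_1,…,x_{2N}) be positive reals satisfying the highest weight condition. Then Algorithm A and Algorithm B, applied to x, produce the same number of steps u and the same data (μ^{(i)}, ν^{(i)}) for all 1 ≤ i ≤ u; in particular they yield the same Young diagram. -/

import Mathlib

/-- A finite sequence of nonnegative reals (as a list, 0-indexed) satisfies the
*highest weight condition* if `∑_{i=1}^{k} (x_{2i-1} - x_{2i}) ≥ 0` for all `k`. -/
def HWC (l : List ℝ) : Prop :=
  ∀ k : ℕ, 2 * k ≤ l.length →
    0 ≤ ∑ j ∈ Finset.range k, (l.getD (2 * j) 0 - l.getD (2 * j + 1) 0)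

/-- One pass of zero-elimination on a list of nonnegative reals whose first entry is
positive, processed with explicit fuel (fuel `≥` the length of the list always
suffices).  A trailing run of zeros is deleted together with, if its length is odd, the
positive entry immediately preceding it (returned as the second component); an interior
run of zeros of even length is deleted; an interior run of zeros of odd length is merged
together with its positive neighbours `a, b` into the single entry `a + b`. -/
noncomputable def squashF : ℕ → List ℝ → List ℝ × ℝ
  | 0, _ => ([], 0)
  | _ + 1, [] => ([], 0)
  | fuel + 1, a :: rest =>
    let m := (rest.takeWhile (fun t => decide (t = 0))).length
    let r := rest.drop m
    if r = [] then (if Even m then ([a], 0) else ([], a))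
    else if Even m then
      let p := squashF fuel (r.headI :: r.tail)
      (a :: p.1, p.2)
    else squashF fuel ((a + r.headI) :: r.tail)

/-- Delete the run of zeros at the left end of `y`, then eliminate all remaining runs of
zeros; returns the resulting list together with the positive entry deleted at the right
end (`0` if no entry was deleted there). -/
noncomputable def contract (y : List ℝ) : List ℝ × ℝ :=
  let y' := y.drop ((y.takeWhile (fun t => decide (t = 0))).length)
  squashF y'.length y'

/-- The minimum entry of a nonempty list of reals. -/
noncomputable def minL (l : List ℝ) : ℝ := l.foldr min l.headI

/-- One step of Algorithm B: subtract the minimum `μ` from every entry and eliminate the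
runs of zeros, the positive entry preceding an odd right-end run of zeros being simply
deleted. -/
noncomputable def stepB (x : List ℝ) : List ℝ :=
  (contract (x.map (fun t => t - minL x))).1

/-- One step of Algorithm A: as in Algorithm B but the positive entry preceding an odd
right-end run of zeros is deleted *and added to the first entry* of the result. -/
noncomputable def stepA (x : List ℝ) : List ℝ :=
  match contract (x.map (fun t => t - minL x)) with
  | ([], _) => []
  | (h :: t, c) => (h + c) :: t

/-- The data `(μ⁽ⁱ⁾, ν⁽ⁱ⁾)` produced by iterating Algorithm A while the current sequence
is nonempty (with fuel; fuel `≥` half the length always suffices). -/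
noncomputable def algStepsA : ℕ → List ℝ → List (ℝ × ℕ)
  | 0, _ => []
  | _ + 1, [] => []
  | fuel + 1, x@(_ :: _) =>
    (minL x, x.length / 2 - (stepA x).length / 2) :: algStepsA fuel (stepA x)

/-- The data `(μ⁽ⁱ⁾, ν⁽ⁱ⁾)` produced by iterating Algorithm B. -/
noncomputable def algStepsB : ℕ → List ℝ → List (ℝ × ℕ)
  | 0, _ => []
  | _ + 1, [] => []
  | fuel + 1, x@(_ :: _) =>
    (minL x, x.length / 2 - (stepB x).length / 2) :: algStepsB fuel (stepB x)

noncomputable def Sa : List ℝ → ℕ → ℝ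
  | [], _ => 0
  | _ :: _, 0 => 0
  | a :: t, n+1 => a - Sa t n

@[simp] lemma Sa_nil (n : ℕ) : Sa [] n = 0 := by cases n <;> rfl
@[simp] lemma Sa_zero (l : List ℝ) : Sa l 0 = 0 := by cases l <;> rfl
@[simp] lemma Sa_cons (a : ℝ) (t : List ℝ) (n : ℕ) : Sa (a::t) (n+1) = a - Sa t n := rfl

lemma Sa_sum (n : ℕ) : ∀ l : List ℝ, Sa l n = ∑ i ∈ Finset.range n, (-1:ℝ)^i * l.getD i 0 := by
  induction n with
  | zero => intro l; simp
  | succ n ih =>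
    intro l
    cases l with
    | nil => simp [List.getD]
    | cons a t =>
      rw [Finset.sum_range_succ']
      simp only [Sa_cons, ih t, List.getD_cons_succ, List.getD_cons_zero, pow_succ,
        pow_zero, one_mul]
      rw [Finset.sum_congr rfl (fun x _ => show (-1:ℝ)^x * -1 * t.getD x 0 = -((-1:ℝ)^x * t.getD x 0) from by ring), Finset.sum_neg_distrib]
      ring
lemma Sa_two_mul_succ (l : List ℝ) (k : ℕ) :
    Sa l (2*(k+1)) = Sa l (2*k) + (l.getD (2*k) 0 - l.getD (2*k+1) 0) := by
  rw [Sa_sum, Sa_sum, show 2*(k+1) = (2*k+1)+1 from by ring, Finset.sum_range_succ,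
    Finset.sum_range_succ]
  have h1 : ((-1:ℝ))^(2*k) = 1 := by
    rw [pow_mul]; norm_num
  have h2 : ((-1:ℝ))^(2*k+1) = -1 := by rw [pow_succ, h1]; ring
  rw [h1, h2]; ring

lemma hwc_sum_eq (l : List ℝ) (k : ℕ) :
    ∑ j ∈ Finset.range k, (l.getD (2*j) 0 - l.getD (2*j+1) 0) = Sa l (2*k) := by
  induction k with
  | zero => simp
  | succ k ih => rw [Finset.sum_range_succ, ih, Sa_two_mul_succ]

lemma Sa_replicate_append (m : ℕ) : ∀ (r : List ℝ) (j : ℕ),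
    Sa (List.replicate m 0 ++ r) (m + j) = if Even m then Sa r j else -Sa r j := by
  induction m with
  | zero => intro r j; simp
  | succ m ih =>
    intro r j
    rw [List.replicate_succ, List.cons_append, show m + 1 + j = (m + j) + 1 from by ring,
      Sa_cons, ih]
    by_cases h : Even m <;> simp [h, Nat.even_add_one]

lemma Sa_map_sub (μ : ℝ) : ∀ (k : ℕ) (l : List ℝ), 2*k ≤ l.length →
    Sa (l.map (fun t => t - μ)) (2*k) = Sa l (2*k) := by
  intro k
  induction k with
  | zero => intro l _; simp
  | succ k ih =>
    intro l hl
    match l with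
    | a :: b :: t =>
      have ht : 2*k ≤ t.length := by simp at hl; omega
      rw [show 2*(k+1) = (2*k+1)+1 from by ring]
      simp only [List.map_cons, Sa_cons]
      rw [ih t ht]
      ring
    | [] => simp at hl
    | [a] => simp at hl; omega
/-- structural facts about the zero-run decomposition used in `squashF`. -/
lemma rest_struct (rest : List ℝ) :
    rest = List.replicate ((rest.takeWhile (fun t => decide (t = 0))).length) 0 ++
      rest.drop ((rest.takeWhile (fun t => decide (t = 0))).length) ∧
    (∀ a t, rest.drop ((rest.takeWhile (fun t => decide (t = 0))).length) = a :: t → a ≠ 0) ∧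
    (rest.takeWhile (fun t => decide (t = 0))).length ≤ rest.length := by
  set p : ℝ → Bool := fun t => decide (t = 0) with hp
  have htw : rest.takeWhile p = List.replicate ((rest.takeWhile p).length) 0 := by
    apply List.eq_replicate_of_mem
    intro b hb
    have : p b = true := List.mem_takeWhile_imp hb
    rw [hp] at this
    exact of_decide_eq_true this
  have hsplit : rest.takeWhile p ++ rest.dropWhile p = rest := List.takeWhile_append_dropWhile (p := p) (l := rest)
  have hdrop : rest.drop ((rest.takeWhile p).length) = rest.dropWhile p := by
    have h2 := List.drop_left (l₁ := rest.takeWhile p) (l₂ := rest.dropWhile p)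
    rw [hsplit] at h2
    exact h2
  refine ⟨?_, ?_, ?_⟩
  · rw [hdrop, ← htw, hsplit]
  · intro a t hat
    rw [hdrop] at hat
    have h3 := List.head_dropWhile_not p (l := rest) (by rw [hat]; simp)
    have h4 : (rest.dropWhile p).head (by rw [hat]; simp) = a := by
      simp [hat]
    rw [h4, hp] at h3
    exact of_decide_eq_false h3
  · exact (List.takeWhile_prefix p).length_le
lemma squashF_cons (fuel : ℕ) (a : ℝ) (rest : List ℝ) :
    squashF (fuel+1) (a :: rest) =
      if rest.drop ((rest.takeWhile (fun t => decide (t = 0))).length) = [] then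
        (if Even ((rest.takeWhile (fun t => decide (t = 0))).length) then ([a], 0) else ([], a))
      else if Even ((rest.takeWhile (fun t => decide (t = 0))).length) then
        ((a :: (squashF fuel
          ((rest.drop ((rest.takeWhile (fun t => decide (t = 0))).length)).headI ::
           (rest.drop ((rest.takeWhile (fun t => decide (t = 0))).length)).tail)).1,
          (squashF fuel
          ((rest.drop ((rest.takeWhile (fun t => decide (t = 0))).length)).headI ::
           (rest.drop ((rest.takeWhile (fun t => decide (t = 0))).length)).tail)).2))
      else squashF fuel
          ((a + (rest.drop ((rest.takeWhile (fun t => decide (t = 0))).length)).headI) ::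
           (rest.drop ((rest.takeWhile (fun t => decide (t = 0))).length)).tail) := rfl

@[simp] lemma squashF_nil (fuel : ℕ) : squashF fuel [] = ([], 0) := by
  cases fuel <;> rfl

lemma squashF_fuel : ∀ (f f' : ℕ) (l : List ℝ), l.length ≤ f → l.length ≤ f' →
    squashF f l = squashF f' l := by
  intro f
  induction f with
  | zero =>
    intro f' l hf _
    have : l = [] := List.length_eq_zero_iff.mp (Nat.le_zero.mp hf)
    subst this; simp
  | succ f ih =>
    intro f' l hf hf'
    match l with
    | [] => simp
    | a :: rest =>
      match f' with
      | 0 => simp at hf'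
      | f'' + 1 =>
        obtain ⟨hrepl, hhead, hmle⟩ := rest_struct rest
        rw [squashF_cons, squashF_cons]
        set m := (rest.takeWhile (fun t => decide (t = 0))).length with hm
        set r := rest.drop m with hr
        have hrlen : r.length = rest.length - m := by rw [hr]; simp
        by_cases h1 : r = []
        · simp [h1]
        · obtain ⟨x, xs, hxxs⟩ := List.exists_cons_of_ne_nil h1
          have hrpos : 1 ≤ r.length := List.length_pos_iff.mpr h1
          have hfa : rest.length + 1 ≤ f + 1 := hf
          have hfb : rest.length + 1 ≤ f'' + 1 := hf'
          have hlr : r.headI :: r.tail = r := by rw [hxxs]; rfl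
          have hlen2 : r.length ≤ f := by omega
          have hlen2' : r.length ≤ f'' := by omega
          by_cases h2 : Even m
          · simp only [h1, h2, if_true, if_false, if_neg, if_pos]
            rw [hlr, ih f'' r hlen2 hlen2']
          · simp only [h1, h2, if_false, if_neg]
            have htl : (r.tail).length + 1 = r.length := by
              rw [hxxs]; simp
            rw [ih f'' _ (by simp; omega) (by simp; omega)]
lemma squashF_shift : ∀ (fuel : ℕ) (l : List ℝ) (d c : ℝ), l.length < fuel →
    squashF fuel ((d+c)::l) =
      (if (squashF fuel (d::l)).1 = [] then ([], (squashF fuel (d::l)).2 + c)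
       else (((squashF fuel (d::l)).1.headI + c) :: (squashF fuel (d::l)).1.tail,
             (squashF fuel (d::l)).2)) := by
  intro fuel
  induction fuel with
  | zero => intro l d c h; omega
  | succ f ih =>
    intro l d c h
    obtain ⟨hrepl, hhead, hmle⟩ := rest_struct l
    rw [squashF_cons, squashF_cons]
    set m := (l.takeWhile (fun t => decide (t = 0))).length with hm
    set r := l.drop m with hr
    have hrlen : r.length = l.length - m := by rw [hr]; simp
    by_cases h1 : r = []
    · by_cases h2 : Even m
      · simp [h1, h2]
      · simp [h1, h2]
    · obtain ⟨x, xs, hxxs⟩ := List.exists_cons_of_ne_nil h1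
      have hrpos : 1 ≤ r.length := List.length_pos_iff.mpr h1
      by_cases h2 : Even m
      · simp [h1, h2]
      · simp only [h1, h2, if_false, if_neg]
        have harg : d + c + r.headI = (d + r.headI) + c := by ring
        rw [harg, ih r.tail (d + r.headI) c (by simp [hxxs] at hrlen ⊢; omega)]
lemma squashF_main : ∀ (fuel : ℕ) (l : List ℝ), l.length ≤ fuel → l ≠ [] →
    0 < l.headI → (∀ z ∈ l, 0 ≤ z) →
    (squashF fuel l).1.length % 2 = l.length % 2 ∧
    0 ≤ (squashF fuel l).2 ∧
    (∀ z ∈ (squashF fuel l).1, 0 < z) ∧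
    (∀ j ≤ (squashF fuel l).1.length, ∃ j' ≤ l.length, j' % 2 = j % 2 ∧
      Sa (squashF fuel l).1 j = Sa l j') := by
  intro fuel
  induction fuel with
  | zero =>
    intro l hf hne _ _
    exact absurd (List.length_eq_zero_iff.mp (Nat.le_zero.mp hf)) hne
  | succ f ih =>
    rintro l hf hne hhd hnn
    match l, hne with
    | a :: rest, _ =>
      have ha : 0 < a := hhd
      obtain ⟨hrepl, hhead, hmle⟩ := rest_struct rest
      rw [squashF_cons]
      set m := (rest.takeWhile (fun t => decide (t = 0))).length with hm
      set r := rest.drop m with hr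
      have hrlen : r.length = rest.length - m := by rw [hr]; simp
      have hlenl : (a :: rest).length = 1 + m + r.length := by simp; omega
      by_cases h1 : r = []
      · rw [if_pos h1]
        have hrest0 : rest.length = m := by rw [h1] at hrlen; simp at hrlen; omega
        by_cases h2 : Even m
        · rw [if_pos h2]
          have hm2 : m % 2 = 0 := Nat.even_iff.mp h2
          refine ⟨by simp only [List.length_cons, List.length_singleton, List.length_nil]
                     revert hrest0 hm2; omega,
            le_refl 0, by intro z hz; simp at hz; subst hz; exact ha, ?_⟩
          intro j hj
          simp at hj
          interval_cases j
          · exact ⟨0, by simp⟩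
          · refine ⟨1, by simp, rfl, ?_⟩
            show Sa [a] (0+1) = Sa (a :: rest) (0+1)
            rw [Sa_cons, Sa_cons]
            simp
        · rw [if_neg h2]
          rw [Nat.even_iff] at h2
          refine ⟨by simp only [List.length_cons, List.length_nil]; revert hrest0 h2; omega,
            le_of_lt ha, by simp, ?_⟩
          intro j hj
          simp at hj
          subst hj
          exact ⟨0, by simp⟩
      · rw [if_neg h1]
        obtain ⟨x, xs, hxxs⟩ := List.exists_cons_of_ne_nil h1
        have hxmem : x ∈ a :: rest := by
          rw [hrepl, hxxs]
          simp
        have hx : 0 < x := by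
          rcases (hnn x hxmem).lt_or_eq with h | h
          · exact h
          · exact absurd h.symm (hhead x xs hxxs)
        have hxsmem : ∀ z ∈ xs, z ∈ a :: rest := by
          intro z hz
          rw [hrepl, hxxs]
          simp [hz]
        have hrf : r.length ≤ f := by
          simp at hf; omega
        have hSrest : ∀ j, Sa rest (m + j) = if Even m then Sa r j else -Sa r j := by
          intro j
          conv_lhs => rw [hrepl]
          exact Sa_replicate_append m r j
        by_cases h2 : Even m
        · rw [if_pos h2]
          have hm2 : m % 2 = 0 := Nat.even_iff.mp h2
          have hlr : r.headI :: r.tail = r := by rw [hxxs]; rfl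
          rw [hlr]
          obtain ⟨P1, P2, P3, P4⟩ := ih r hrf h1 (by rw [hxxs]; exact hx)
            (fun z hz => hnn z (by
              rw [hrepl]
              simp only [List.mem_cons, List.mem_append]
              right; right; exact hz))
          refine ⟨by rw [List.length_cons, List.length_cons]; revert P1 hrlen hmle hm2; omega,
            P2, ?_, ?_⟩
          · intro z hz
            simp at hz
            rcases hz with h | h
            · exact h ▸ ha
            · exact P3 z h
          · intro j hj
            match j with
            | 0 => exact ⟨0, by simp⟩
            | jj + 1 =>
              simp at hj
              obtain ⟨j₂, hj₂le, hj₂par, hj₂Sa⟩ := P4 jj hj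
              refine ⟨1 + m + j₂, by revert hlenl hj₂le; omega,
                by revert hj₂par hm2; omega, ?_⟩
              rw [show 1 + m + j₂ = (m + j₂) + 1 from by ring, Sa_cons, Sa_cons,
                hSrest j₂, if_pos h2, ← hj₂Sa]
        · rw [if_neg h2]
          have hm2 : m % 2 = 1 := Nat.odd_iff.mp (Nat.not_even_iff_odd.mp h2)
          have hlr : r.headI = x ∧ r.tail = xs := by rw [hxxs]; exact ⟨rfl, rfl⟩
          rw [hlr.1, hlr.2]
          have hlen3 : ((a + x) :: xs).length ≤ f := by
            rw [hxxs] at hrf; simpa using hrf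
          obtain ⟨P1, P2, P3, P4⟩ := ih ((a+x) :: xs) hlen3 (by simp)
            (by simp; positivity)
            (by
              intro z hz
              simp at hz
              rcases hz with h | h
              · rw [h]; positivity
              · exact hnn z (hxsmem z h))
          have hrlen2 : ((a+x) :: xs).length = r.length := by rw [hxxs]; rfl
          refine ⟨by rw [P1, hrlen2, List.length_cons]; revert hrlen hmle hm2; omega,
            P2, P3, ?_⟩
          intro j hj
          obtain ⟨j₂, hj₂le, hj₂par, hj₂Sa⟩ := P4 j hj
          match j₂ with
          | 0 =>
            refine ⟨0, by simp, by revert hj₂par; omega, ?_⟩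
            rw [Sa_zero] at hj₂Sa ⊢
            exact hj₂Sa
          | jj' + 1 =>
            rw [hrlen2] at hj₂le
            refine ⟨1 + m + (jj' + 1), by revert hlenl hj₂le; omega,
              by revert hj₂par hm2; omega, ?_⟩
            rw [show 1 + m + (jj' + 1) = (m + (jj'+1)) + 1 from by ring, Sa_cons,
              hSrest (jj'+1), if_neg h2, hj₂Sa, Sa_cons]
            rw [hxxs]
            rw [Sa_cons]
            ring
lemma foldr_min_spec : ∀ (t : List ℝ), t ≠ [] →
    ∃ m, m ∈ t ∧ (∀ z ∈ t, m ≤ z) ∧ ∀ i : ℝ, t.foldr min i = min m i := by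
  intro t
  induction t with
  | nil => intro h; exact absurd rfl h
  | cons a s ih =>
    intro _
    by_cases hs : s = []
    · subst hs
      exact ⟨a, by simp, by simp, fun i => by simp⟩
    · obtain ⟨m, hmem, hle, hfold⟩ := ih hs
      refine ⟨min a m, ?_, ?_, ?_⟩
      · rcases min_choice a m with h | h <;> rw [h]
        · simp
        · simp [hmem]
      · intro z hz
        simp at hz
        rcases hz with h | h
        · rw [h]; exact min_le_left _ _
        · exact le_trans (min_le_right _ _) (hle z h)
      · intro i
        rw [List.foldr_cons, hfold, min_assoc]

lemma minL_cons_eq (h : ℝ) (t : List ℝ) (m : ℝ) (hm : m ≤ h)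
    (hfold : ∀ i : ℝ, t.foldr min i = min m i) : minL (h::t) = m := by
  unfold minL
  rw [List.foldr_cons, List.headI_cons, hfold, min_comm m h, ← min_assoc, min_self]
  exact min_eq_right hm

lemma even_leading (y : List ℝ) (hnn : ∀ z ∈ y, 0 ≤ z) (heven : Even y.length)
    (hhwc : ∀ k, 2*k ≤ y.length → 0 ≤ Sa y (2*k)) :
    Even ((y.takeWhile (fun t => decide (t = 0))).length) := by
  obtain ⟨hrepl, hhead, hmle⟩ := rest_struct y
  set L := (y.takeWhile (fun t => decide (t = 0))).length with hL
  set ry := y.drop L with hry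
  by_contra hodd
  have hL2 : L % 2 = 1 := Nat.odd_iff.mp (Nat.not_even_iff_odd.mp hodd)
  have hylen : y.length = L + ry.length := by
    conv_lhs => rw [hrepl]
    simp
  by_cases h1 : ry = []
  · rw [h1] at hylen
    simp at hylen
    rw [Nat.even_iff] at heven
    omega
  · obtain ⟨x, xs, hxxs⟩ := List.exists_cons_of_ne_nil h1
    have hx : 0 < x := by
      rcases (hnn x (by rw [hrepl, hxxs]; simp)).lt_or_eq with h | h
      · exact h
      · exact absurd h.symm (hhead x xs hxxs)
    obtain ⟨k, hk⟩ : ∃ k, L + 1 = 2 * k := by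
      rw [Nat.even_iff] at *
      refine ⟨(L+1)/2, by omega⟩
    have hle : 2 * k ≤ y.length := by
      rw [← hk, hylen, hxxs]
      simp
    have := hhwc k hle
    rw [← hk] at this
    have heq : Sa y (L + 1) = -x := by
      conv_lhs => rw [hrepl, hxxs]
      rw [Sa_replicate_append, if_neg hodd, Sa_cons, Sa_zero]
      ring
    rw [heq] at this
    linarith
lemma contract_nil : contract ([] : List ℝ) = ([], 0) := by
  unfold contract
  simp

lemma contract_rel (d c : ℝ) (t' : List ℝ) (hd : 0 ≤ d) (hc : 0 ≤ c)
    (hLeven : Even (((d :: t').takeWhile (fun t => decide (t = 0))).length)) :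
    contract ((d+c) :: t') =
      (if (contract (d :: t')).1 = [] then ([], (contract (d :: t')).2 + c)
       else (((contract (d :: t')).1.headI + c) :: (contract (d :: t')).1.tail,
             (contract (d :: t')).2)) := by
  by_cases hd0 : d = 0
  · subst hd0
    by_cases hc0 : c = 0
    · subst hc0
      rw [add_zero]
      by_cases hP : (contract ((0:ℝ) :: t')).1 = []
      · rw [if_pos hP, add_zero, ← hP]
      · rw [if_neg hP]
        obtain ⟨q, qt, hq⟩ := List.exists_cons_of_ne_nil hP
        rw [hq]
        simp only [List.headI_cons, List.tail_cons, add_zero]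
        rw [← hq]
    · -- d = 0, c > 0
      have hcpos : 0 < c := lt_of_le_of_ne hc (Ne.symm hc0)
      obtain ⟨hrepl, hhead, hmle⟩ := rest_struct t'
      set m₀ := (t'.takeWhile (fun t => decide (t = 0))).length with hm₀
      set r := t'.drop m₀ with hr
      -- left side: no leading zeros
      have htwa : ((0+c) :: t').takeWhile (fun t => decide (t = 0)) = [] := by
        rw [zero_add]
        apply List.takeWhile_cons_of_neg
        simp [hc0]
      have htwb : ((0:ℝ) :: t').takeWhile (fun t => decide (t = 0)) =
          0 :: t'.takeWhile (fun t => decide (t = 0)) := by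
        apply List.takeWhile_cons_of_pos
        simp
      have hm₀odd : ¬ Even m₀ := by
        rw [htwb] at hLeven
        simp only [List.length_cons] at hLeven
        rw [Nat.even_add_one] at hLeven
        exact fun h => hLeven h
      have hcb : contract ((0:ℝ) :: t') = squashF r.length r := by
        unfold contract
        rw [htwb]
        simp only [List.length_cons, List.drop_succ_cons]
        try rfl
      have hca : contract ((0+c) :: t') = squashF (t'.length + 1) ((0+c) :: t') := by
        unfold contract
        rw [htwa]
        simp
      rw [hca, hcb, squashF_cons]
      by_cases h1 : r = []
      · rw [if_pos (by rw [← hr]; exact h1), if_neg hm₀odd, h1]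
        simp
      · rw [if_neg (by rw [← hr]; exact h1), if_neg hm₀odd]
        obtain ⟨x, xs, hxxs⟩ := List.exists_cons_of_ne_nil h1
        have hrlen : r.length ≤ t'.length := by
          rw [hr]; simp
        have hxslen : xs.length + 1 = r.length := by rw [hxxs]; rfl
        have hhd : (t'.drop ((t'.takeWhile (fun t => decide (t = 0))).length)).headI = x := by
          rw [← hr, hxxs]; rfl
        have htl : (t'.drop ((t'.takeWhile (fun t => decide (t = 0))).length)).tail = xs := by
          rw [← hr, hxxs]; rfl
        rw [hhd, htl, show 0 + c + x = x + c from by ring]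
        rw [squashF_shift (t'.length) xs x c (by revert hxslen hrlen; omega)]
        rw [squashF_fuel t'.length r.length (x :: xs)
          (by rw [← hxxs]; exact hrlen) (by rw [← hxxs])]
        rw [hxxs]
  · -- d > 0
    have hdpos : 0 < d := lt_of_le_of_ne hd (Ne.symm hd0)
    have htwa : ((d+c) :: t').takeWhile (fun t => decide (t = 0)) = [] := by
      apply List.takeWhile_cons_of_neg
      simp; positivity
    have htwb : (d :: t').takeWhile (fun t => decide (t = 0)) = [] := by
      apply List.takeWhile_cons_of_neg
      simp [hd0]
    have hca : contract ((d+c) :: t') = squashF (t'.length + 1) ((d+c) :: t') := by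
      unfold contract; rw [htwa]; simp
    have hcb : contract (d :: t') = squashF (t'.length + 1) (d :: t') := by
      unfold contract; rw [htwb]; simp
    rw [hca, hcb, squashF_shift (t'.length + 1) t' d c (by omega)]
lemma stepAB_rel (h c : ℝ) (t : List ℝ) (hc : 0 ≤ c)
    (hpos : ∀ z ∈ (h::t), 0 < z) (ht : t ≠ [])
    (heven : (h::t).length % 2 = 0)
    (hhwc : ∀ k, 2*k ≤ (h::t).length → 0 ≤ Sa (h::t) (2*k)) :
    minL ((h+c)::t) = minL (h::t) ∧
    ((stepA ((h+c)::t) = [] ∧ stepB (h::t) = []) ∨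
      ∃ c' h' t', 0 ≤ c' ∧ stepB (h::t) = h'::t' ∧ stepA ((h+c)::t) = (h'+c')::t') ∧
    (∀ z ∈ stepB (h::t), 0 < z) ∧
    ((stepB (h::t)).length % 2 = 0) ∧
    (∀ k, 2*k ≤ (stepB (h::t)).length → 0 ≤ Sa (stepB (h::t)) (2*k)) := by
  obtain ⟨m, hmmem, hmle, hmfold⟩ := foldr_min_spec t ht
  obtain ⟨th, tt, htt⟩ := List.exists_cons_of_ne_nil ht
  have hht : th ≤ h := by
    have h2 := hhwc 1 (by rw [htt]; simp)
    rw [htt, show 2*1 = 1+1 from rfl, Sa_cons, Sa_cons, Sa_zero] at h2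
    linarith
  have hmh : m ≤ h := le_trans (hmle th (by rw [htt]; simp)) hht
  have hmhc : m ≤ h + c := by linarith
  have hμb : minL (h::t) = m := minL_cons_eq h t m hmh hmfold
  have hμa : minL ((h+c)::t) = m := minL_cons_eq (h+c) t m hmhc hmfold
  set t' := t.map (fun z => z - m) with ht'
  have hbmap : (h::t).map (fun z => z - minL (h::t)) = (h - m) :: t' := by
    rw [hμb, List.map_cons]
  have hamap : ((h+c)::t).map (fun z => z - minL ((h+c)::t)) = ((h - m) + c) :: t' := by
    rw [hμa, List.map_cons, show h + c - m = (h - m) + c from by ring]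
  have hd : 0 ≤ h - m := by linarith
  have ht'nn : ∀ z ∈ t', 0 ≤ z := by
    intro z hz
    rw [ht'] at hz
    simp only [List.mem_map] at hz
    obtain ⟨w, hw, rfl⟩ := hz
    have := hmle w hw
    linarith
  have hynn : ∀ z ∈ (h - m) :: t', 0 ≤ z := by
    intro z hz
    rcases List.mem_cons.mp hz with h' | h'
    · rw [h']; exact hd
    · exact ht'nn z h'
  have hylen : ((h - m) :: t').length = (h::t).length := by
    rw [ht']; simp
  have hyhwc : ∀ k, 2*k ≤ ((h - m) :: t').length → 0 ≤ Sa ((h - m) :: t') (2*k) := by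
    intro k hk
    have heq : Sa ((h - m) :: t') (2*k) = Sa (h::t) (2*k) := by
      rw [show (h - m) :: t' = (h::t).map (fun z => z - m) from by rw [ht']; rfl]
      exact Sa_map_sub m k (h::t) (by rw [hylen] at hk; exact hk)
    rw [heq]
    exact hhwc k (by rw [hylen] at hk; exact hk)
  have hLeven : Even ((((h - m) :: t').takeWhile (fun z => decide (z = 0))).length) :=
    even_leading _ hynn (by rw [hylen, Nat.even_iff]; exact heven) hyhwc
  have hsB : stepB (h::t) = (contract ((h - m) :: t')).1 := by
    unfold stepB
    rw [hbmap]
  have hCR := contract_rel (h - m) c t' hd hc hLeven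
  refine ⟨by rw [hμa, hμb], ?_⟩
  -- structure of contract ((h-m)::t')
  obtain ⟨hrepl, hhead, hmleL⟩ := rest_struct ((h - m) :: t')
  set L := ((((h - m) :: t').takeWhile (fun z => decide (z = 0))).length) with hL
  set ry := ((h - m) :: t').drop L with hry
  have hPeq : contract ((h - m) :: t') = squashF ry.length ry := rfl
  have hrylen : L + ry.length = ((h - m) :: t').length := by
    conv_rhs => rw [hrepl]
    simp
  have hL2 : L % 2 = 0 := Nat.even_iff.mp hLeven
  by_cases hrynil : ry = []
  · -- everything vanishes
    have hP : contract ((h - m) :: t') = ([], 0) := by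
      rw [hPeq, hrynil]
      simp
    have hB : stepB (h::t) = [] := by rw [hsB, hP]
    have hA : stepA ((h+c)::t) = [] := by
      unfold stepA
      rw [hamap, hCR, hP]
      simp
    refine ⟨Or.inl ⟨hA, hB⟩, ?_, ?_, ?_⟩
    · rw [hB]; intro z hz; simp at hz
    · rw [hB]; rfl
    · rw [hB]; intro k hk; simp at hk; subst hk; simp
  · obtain ⟨x, xs, hxxs⟩ := List.exists_cons_of_ne_nil hrynil
    have hx : 0 < x := by
      rcases (hynn x (by
        rw [hrepl, hxxs]
        simp)).lt_or_eq with h' | h'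
      · exact h'
      · exact absurd h'.symm (hhead x xs hxxs)
    obtain ⟨P1, P2, P3, P4⟩ := squashF_main ry.length ry (le_refl _) hrynil
      (by rw [hxxs]; exact hx)
      (by
        intro z hz
        exact hynn z (by rw [hrepl]; exact List.mem_append_right _ hz))
    rw [← hPeq] at P1 P2 P3 P4
    have hparity : (contract ((h - m) :: t')).1.length % 2 = 0 := by
      have h5 : ry.length % 2 = 0 := by
        have h6 := hylen
        revert hrylen hL2 heven h6
        omega
      omega
    have hhwcP : ∀ k, 2*k ≤ (contract ((h - m) :: t')).1.length →
        0 ≤ Sa (contract ((h - m) :: t')).1 (2*k) := by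
      intro k hk
      obtain ⟨j', hj'le, hj'par, hj'Sa⟩ := P4 (2*k) hk
      have hj'ev : j' % 2 = 0 := by omega
      have hSry : Sa ((h - m) :: t') (L + j') = Sa ry j' := by
        conv_lhs => rw [hrepl]
        rw [Sa_replicate_append, if_pos hLeven]
      obtain ⟨k', hk'⟩ : ∃ k', L + j' = 2 * k' := ⟨(L + j')/2, by omega⟩
      have := hyhwc k' (by rw [← hk']; omega)
      rw [← hk', hSry, ← hj'Sa] at this
      exact this
    by_cases hP1 : (contract ((h - m) :: t')).1 = []
    · have hB : stepB (h::t) = [] := by rw [hsB, hP1]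
      have hA : stepA ((h+c)::t) = [] := by
        unfold stepA
        rw [hamap, hCR, if_pos hP1]
      refine ⟨Or.inl ⟨hA, hB⟩, ?_, ?_, ?_⟩
      · rw [hB]; intro z hz; simp at hz
      · rw [hB]; rfl
      · rw [hB]; intro k hk; simp at hk; subst hk; simp
    · obtain ⟨q, qt, hq⟩ := List.exists_cons_of_ne_nil hP1
      have hB : stepB (h::t) = q :: qt := by rw [hsB, hq]
      have hA : stepA ((h+c)::t) = (q + (c + (contract ((h - m) :: t')).2)) :: qt := by
        unfold stepA
        rw [hamap, hCR, if_neg hP1, hq]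
        show (q + c + (contract ((h - m) :: t')).2) :: qt = _
        rw [show q + c + (contract ((h - m) :: t')).2
            = q + (c + (contract ((h - m) :: t')).2) from by ring]
      refine ⟨Or.inr ⟨c + (contract ((h - m) :: t')).2, q, qt, by linarith, hB, hA⟩, ?_, ?_, ?_⟩
      · rw [hB, ← hq]; exact P3
      · rw [hB, ← hq]; exact hparity
      · rw [hB, ← hq]; exact hhwcP
lemma algStepsA_nil (f : ℕ) : algStepsA f [] = [] := by cases f <;> rfl
lemma algStepsB_nil (f : ℕ) : algStepsB f [] = [] := by cases f <;> rfl
lemma algStepsA_cons (f : ℕ) (a : ℝ) (l : List ℝ) :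
    algStepsA (f+1) (a::l) =
      (minL (a::l), (a::l).length / 2 - (stepA (a::l)).length / 2) :: algStepsA f (stepA (a::l)) := rfl
lemma algStepsB_cons (f : ℕ) (a : ℝ) (l : List ℝ) :
    algStepsB (f+1) (a::l) =
      (minL (a::l), (a::l).length / 2 - (stepB (a::l)).length / 2) :: algStepsB f (stepB (a::l)) := rfl

lemma steps_eq : ∀ (fuel : ℕ) (a b : List ℝ),
    ((a = [] ∧ b = []) ∨ ∃ c h t, 0 ≤ c ∧ b = h::t ∧ a = (h+c)::t) →
    (∀ z ∈ b, 0 < z) → (b.length % 2 = 0) →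
    (∀ k, 2*k ≤ b.length → 0 ≤ Sa b (2*k)) →
    algStepsA fuel a = algStepsB fuel b := by
  intro fuel
  induction fuel with
  | zero => intro a b _ _ _ _; rfl
  | succ f ih =>
    rintro a b (⟨rfl, rfl⟩ | ⟨c, h, t, hc, rfl, rfl⟩) hpos heven hhwc
    · rw [algStepsA_nil, algStepsB_nil]
    · have ht : t ≠ [] := by
        intro h'
        rw [h'] at heven
        simp at heven
      obtain ⟨hmin, hrel, hpos', hpar', hhwc'⟩ := stepAB_rel h c t hc hpos ht heven hhwc
      rw [algStepsA_cons, algStepsB_cons, hmin]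
      have hlen : ((h+c)::t).length = (h::t).length := by simp
      have hslen : (stepA ((h+c)::t)).length = (stepB (h::t)).length := by
        rcases hrel with ⟨hA, hB⟩ | ⟨c', h', t', _, hB, hA⟩
        · rw [hA, hB]
        · rw [hA, hB]; simp
      rw [hlen, hslen, ih (stepA ((h+c)::t)) (stepB (h::t)) ?_ hpos' hpar' hhwc']
      rcases hrel with ⟨hA, hB⟩ | ⟨c', h', t', hc', hB, hA⟩
      · exact Or.inl ⟨hA, hB⟩
      · exact Or.inr ⟨c', h', t', hc', hB, hA⟩

/-- Algorithms A and B, applied to a positive highest weight sequence, produce the same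
number of steps and the same data `(μ⁽ⁱ⁾, ν⁽ⁱ⁾)`; in particular the same Young diagram. -/
theorem algA_eq_algB (N : ℕ) (hN : 1 ≤ N) (x : List ℝ) (hlen : x.length = 2 * N)
    (hpos : ∀ t ∈ x, 0 < t) (hhwc : HWC x) :
    algStepsA x.length x = algStepsB x.length x := by
  have hhwc' : ∀ k, 2*k ≤ x.length → 0 ≤ Sa x (2*k) := by
    intro k hk
    have := hhwc k hk
    rwa [hwc_sum_eq] at this
  obtain ⟨h, t, rfl⟩ : ∃ h t, x = h :: t := by
    cases x with
    | nil => simp at hlen; omega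
    | cons a l => exact ⟨a, l, rfl⟩
  exact steps_eq _ _ _ (Or.inr ⟨0, h, t, le_refl 0, rfl, by rw [add_zero]⟩)
    hpos (by rw [hlen]; omega) hhwc'
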